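/- For any relation S ⊆ Y × X and ε > 0, the following sets of operators are closed in the weak operator topology: (i) operators with support contained in S; (ii) operators with support ε-quasi-contained in S (i.e. ‖χ_B t χ_A‖ ≤ ε whenever B ∩ S(A) = ∅); (iii) operators with support ε-approximately contained in S (i.e. within norm distance ε of some operator with support contained in S). -/

import Mathlib

open ContinuousLinearMap

/-- Composition of relations. -/
def relComp {X Y Z : Type*} (S : Set (Z × Y)) (R : Set (Y × X)) : Set (Z × X) :=
  {p | ∃ y, (p.1, y) ∈ S ∧ (y, p.2) ∈ R}

/-- Transposition of a relation. -/
def relOp {X Y : Type*} (R : Set (Y × X)) : Set (X × Y) := {p | (p.2, p.1) ∈ R}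

/-- Image of a set under a relation: `R(A) = {y | ∃ x ∈ A, (y,x) ∈ R}`. -/
def relImage {X Y : Type*} (R : Set (Y × X)) (A : Set X) : Set Y :=
  {y | ∃ x ∈ A, (y, x) ∈ R}

/-- A coarse structure on a set `X`. -/
structure CoarseStructure (X : Type*) where
  ents : Set (Set (X × X))
  mem_of_subset : ∀ {E F : Set (X × X)}, E ∈ ents → F ⊆ E → F ∈ ents
  union_mem : ∀ {E F : Set (X × X)}, E ∈ ents → F ∈ ents → E ∪ F ∈ ents
  diag_mem : {p : X × X | p.1 = p.2} ∈ ents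
  op_mem : ∀ {E : Set (X × X)}, E ∈ ents → relOp E ∈ ents
  comp_mem : ∀ {E F : Set (X × X)}, E ∈ ents → F ∈ ents → relComp E F ∈ ents

/-- A coarse geometric module for a coarse space `(X, 𝓔)`: a Hilbert space `H` together with
a nondegenerate unital representation of a unital Boolean algebra of subsets of `X` by
orthogonal projections. -/
structure CoarseModule {X : Type*} (𝓔 : CoarseStructure X) (H : Type*)
    [NormedAddCommGroup H] [InnerProductSpace ℂ H] [CompleteSpace H] where
  meas : Set (Set X)
  univ_mem : Set.univ ∈ meas
  inter_mem : ∀ {A B : Set X}, A ∈ meas → B ∈ meas → A ∩ B ∈ meas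
  compl_mem : ∀ {A : Set X}, A ∈ meas → Aᶜ ∈ meas
  proj : Set X → H →L[ℂ] H
  proj_idem : ∀ A ∈ meas, IsIdempotentElem (proj A)
  proj_sa : ∀ A ∈ meas, IsSelfAdjoint (proj A)
  proj_inter : ∀ A ∈ meas, ∀ B ∈ meas, proj (A ∩ B) = (proj A).comp (proj B)
  proj_union : ∀ A ∈ meas, ∀ B ∈ meas, A ∩ B = ∅ → proj (A ∪ B) = proj A + proj B
  proj_univ : proj Set.univ = 1
  nondegenerate : ∃ E ∈ 𝓔.ents, relOp E = E ∧ {p : X × X | p.1 = p.2} ⊆ E ∧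
    (Submodule.span ℂ {v : H | ∃ A ∈ meas, A ×ˢ A ⊆ E ∧ v ∈ Set.range (proj A)}).topologicalClosure = ⊤

variable {X Y : Type*} {𝓔 : CoarseStructure X} {𝓕 : CoarseStructure Y}
  {HX HY : Type*}
  [NormedAddCommGroup HX] [InnerProductSpace ℂ HX] [CompleteSpace HX]
  [NormedAddCommGroup HY] [InnerProductSpace ℂ HY] [CompleteSpace HY]

/-- The support of an operator `t : H_X → H_Y` is contained in `S ⊆ Y × X` if
`χ_B ∘ t ∘ χ_A = 0` for all measurable `A ⊆ X`, `B ⊆ Y` with `B ∩ S(A) = ∅`. -/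
def SuppIn (MX : CoarseModule 𝓔 HX) (MY : CoarseModule 𝓕 HY)
    (t : HX →L[ℂ] HY) (S : Set (Y × X)) : Prop :=
  ∀ A ∈ MX.meas, ∀ B ∈ MY.meas, B ∩ relImage S A = ∅ →
    (MY.proj B).comp (t.comp (MX.proj A)) = 0

/-- The support of `t` is `ε`-quasi-contained in `S`: `‖χ_B t χ_A‖ ≤ ε` whenever
`B ∩ S(A) = ∅` for measurable `A, B`. -/
def SuppQuasiIn (MX : CoarseModule 𝓔 HX) (MY : CoarseModule 𝓕 HY)
    (t : HX →L[ℂ] HY) (ε : ℝ) (S : Set (Y × X)) : Prop :=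
  ∀ A ∈ MX.meas, ∀ B ∈ MY.meas, B ∩ relImage S A = ∅ →
    ‖(MY.proj B).comp (t.comp (MX.proj A))‖ ≤ ε

/-- The support of `t` is `ε`-approximately contained in `S`: `t` is within norm distance
`ε` of some operator with support contained in `S`. -/
def SuppApproxIn (MX : CoarseModule 𝓔 HX) (MY : CoarseModule 𝓕 HY)
    (t : HX →L[ℂ] HY) (ε : ℝ) (S : Set (Y × X)) : Prop :=
  ∃ s : HX →L[ℂ] HY, SuppIn MX MY s S ∧ ‖t - s‖ ≤ ε

section Aux

local notation "⟪" x ", " y "⟫" => @inner ℂ _ _ x y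

private lemma eq_zero_of_inner_aux {w : HY} (h : ∀ u : HY, ⟪u, w⟫ = 0) : w = 0 :=
  ext_inner_left ℂ fun u => by simp [h u]

private lemma norm_le_of_inner_aux {w : HY} {c : ℝ} (hc : 0 ≤ c)
    (h : ∀ u : HY, ‖⟪u, w⟫‖ ≤ c * ‖u‖) : ‖w‖ ≤ c := by
  rcases eq_or_ne w 0 with rfl | hw
  · simpa using hc
  · have h0 : 0 < ‖w‖ := norm_pos_iff.mpr hw
    have := h w
    rw [inner_self_eq_norm_sq_to_K] at this
    have h2 : ‖w‖ * ‖w‖ ≤ c * ‖w‖ := by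
      simpa [norm_pow, sq] using this
    exact le_of_mul_le_mul_right h2 h0

private lemma op_eq_zero_iff_aux (s : HX →L[ℂ] HY) (P : HY →L[ℂ] HY) (Q : HX →L[ℂ] HX) :
    P.comp (s.comp Q) = 0 ↔ ∀ (x : HX) (u : HY), ⟪u, P (s (Q x))⟫ = 0 := by
  constructor
  · intro h x u
    have := ContinuousLinearMap.ext_iff.mp h x
    simp only [ContinuousLinearMap.comp_apply, ContinuousLinearMap.zero_apply] at this
    simp [this]
  · intro h
    ext x
    exact eq_zero_of_inner_aux (h x)

private lemma op_norm_le_iff_aux (s : HX →L[ℂ] HY) (P : HY →L[ℂ] HY) (Q : HX →L[ℂ] HX)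
    {c : ℝ} (hc : 0 ≤ c) :
    ‖P.comp (s.comp Q)‖ ≤ c ↔ ∀ (x : HX) (u : HY), ‖⟪u, P (s (Q x))⟫‖ ≤ c * ‖x‖ * ‖u‖ := by
  constructor
  · intro h x u
    calc ‖⟪u, P (s (Q x))⟫‖ ≤ ‖u‖ * ‖P (s (Q x))‖ := norm_inner_le_norm _ _
    _ ≤ ‖u‖ * (‖P.comp (s.comp Q)‖ * ‖x‖) := by
        gcongr
        exact (P.comp (s.comp Q)).le_opNorm x
    _ ≤ ‖u‖ * (c * ‖x‖) := by gcongr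
    _ = c * ‖x‖ * ‖u‖ := by ring
  · intro h
    refine (P.comp (s.comp Q)).opNorm_le_bound hc fun x => ?_
    refine norm_le_of_inner_aux (by positivity) fun u => ?_
    calc ‖⟪u, P (s (Q x))⟫‖ ≤ c * ‖x‖ * ‖u‖ := h x u
    _ = c * ‖x‖ * ‖u‖ := rfl

private lemma cont_aux (z : HX) (φ : HY →L[ℂ] ℂ) :
    Continuous fun t : HX →WOT[ℂ] HY => φ ((((ContinuousLinearMapWOT.linearEquiv ℂ : (HX →WOT[ℂ] HY) ≃ₗ[ℂ] (HX →L[ℂ] HY)).symm).symm t) z) :=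
  ContinuousLinearMapWOT.continuous_dual_apply z φ

/-- Reconstruction of an operator from a bounded "matrix coefficient" function. -/
private lemma exists_op_aux (f : HX × (HY →L[ℂ] ℂ) → ℂ) (C : ℝ) (hC : 0 ≤ C)
    (hbd : ∀ p, ‖f p‖ ≤ C * ‖p.1‖ * ‖p.2‖)
    (h1 : ∀ x (y y' : HY →L[ℂ] ℂ), f (x, y + y') = f (x, y) + f (x, y'))
    (h2 : ∀ x (c : ℂ) (y : HY →L[ℂ] ℂ), f (x, c • y) = c * f (x, y))
    (h3 : ∀ x x' (y : HY →L[ℂ] ℂ), f (x + x', y) = f (x, y) + f (x', y))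
    (h4 : ∀ (c : ℂ) x (y : HY →L[ℂ] ℂ), f (c • x, y) = c * f (x, y)) :
    ∃ t : HX →L[ℂ] HY, ‖t‖ ≤ C ∧ ∀ x y, y (t x) = f (x, y) := by
  classical
  set D := InnerProductSpace.toDual ℂ HY with hD
  -- the vector `v x` representing `y ↦ f (x, y)`
  have φdef : ∀ x : HX, ∃ φ : HY →L[ℂ] ℂ, (∀ w, φ w = (starRingEnd ℂ) (f (x, D w))) ∧
      ‖φ‖ ≤ C * ‖x‖ := by
    intro x
    refine ⟨LinearMap.mkContinuous
      { toFun := fun w => (starRingEnd ℂ) (f (x, D w))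
        map_add' := fun w w' => by
          show (starRingEnd ℂ) (f (x, D (w + w'))) = _
          rw [map_add D, h1, map_add]
        map_smul' := fun c w => by
          show (starRingEnd ℂ) (f (x, D (c • w))) = _
          rw [LinearIsometryEquiv.map_smulₛₗ, h2]
          simp [mul_comm] }
      (C * ‖x‖) (fun w => ?_), fun w => rfl, LinearMap.mkContinuous_norm_le _ (by positivity) _⟩
    have := hbd (x, D w)
    simpa [mul_assoc] using this
  choose φ hφ hφn using φdef
  set v : HX → HY := fun x => D.symm (φ x) with hv
  have hDv : ∀ x, D (v x) = φ x := fun x => D.apply_symm_apply (φ x)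
  have key : ∀ x (y : HY →L[ℂ] ℂ), y (v x) = f (x, y) := by
    intro x y
    obtain ⟨w, rfl⟩ : ∃ w, D w = y := ⟨D.symm y, D.apply_symm_apply y⟩
    rw [InnerProductSpace.toDual_apply_apply]
    calc ⟪w, v x⟫ = (starRingEnd ℂ) ⟪v x, w⟫ := (inner_conj_symm _ _).symm
    _ = (starRingEnd ℂ) ((D (v x)) w) := by rw [InnerProductSpace.toDual_apply_apply]
    _ = (starRingEnd ℂ) ((φ x) w) := by rw [hDv]
    _ = f (x, D w) := by rw [hφ, Complex.conj_conj]
  have keyi : ∀ x (u : HY), ⟪u, v x⟫ = f (x, D u) := by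
    intro x u
    have := key x (D u)
    rwa [InnerProductSpace.toDual_apply_apply] at this
  have vnorm : ∀ x, ‖v x‖ ≤ C * ‖x‖ := by
    intro x
    have : ‖v x‖ = ‖φ x‖ := D.symm.norm_map (φ x)
    rw [this]; exact hφn x
  have vadd : ∀ x x', v (x + x') = v x + v x' := by
    intro x x'
    refine ext_inner_left ℂ fun u => ?_
    rw [keyi, h3, inner_add_right, keyi, keyi]
  have vsmul : ∀ (c : ℂ) x, v (c • x) = c • v x := by
    intro c x
    refine ext_inner_left ℂ fun u => ?_
    rw [keyi, h4, inner_smul_right, keyi]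
  refine ⟨LinearMap.mkContinuous
    { toFun := v, map_add' := vadd, map_smul' := vsmul } C (fun x => vnorm x),
    LinearMap.mkContinuous_norm_le _ hC _, fun x y => key x y⟩

/-- The closed ball of radius `C` is WOT-compact. -/
private lemma isCompact_wotBall (C : ℝ) (hC : 0 ≤ C) :
    IsCompact {t : HX →WOT[ℂ] HY | ‖((ContinuousLinearMapWOT.linearEquiv ℂ : (HX →WOT[ℂ] HY) ≃ₗ[ℂ] (HX →L[ℂ] HY)).symm).symm t‖ ≤ C} := by
  rw [(ContinuousLinearMapWOT.isEmbedding_inducingFn).isInducing.isCompact_iff]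
  set ind := ContinuousLinearMapWOT.inducingFn (RingHom.id ℂ) HX HY with hind
  set K : Set (HX × (HY →L[ℂ] ℂ) → ℂ) :=
    Set.pi Set.univ fun p => Metric.closedBall (0 : ℂ) (C * ‖p.1‖ * ‖p.2‖) with hK
  set L : Set (HX × (HY →L[ℂ] ℂ) → ℂ) :=
    {f | (∀ x (y y' : HY →L[ℂ] ℂ), f (x, y + y') = f (x, y) + f (x, y')) ∧
         (∀ x (c : ℂ) (y : HY →L[ℂ] ℂ), f (x, c • y) = c * f (x, y)) ∧
         (∀ x x' (y : HY →L[ℂ] ℂ), f (x + x', y) = f (x, y) + f (x', y)) ∧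
         (∀ (c : ℂ) x (y : HY →L[ℂ] ℂ), f (c • x, y) = c * f (x, y))} with hL
  have c1 : IsClosed {f : HX × (HY →L[ℂ] ℂ) → ℂ |
      ∀ x (y y' : HY →L[ℂ] ℂ), f (x, y + y') = f (x, y) + f (x, y')} := by
    simp only [Set.setOf_forall]
    exact isClosed_iInter fun x => isClosed_iInter fun y => isClosed_iInter fun y' =>
      isClosed_eq (continuous_apply (x, y + y'))
        ((continuous_apply (x, y)).add (continuous_apply (x, y')))
  have c2 : IsClosed {f : HX × (HY →L[ℂ] ℂ) → ℂ |
      ∀ x (c : ℂ) (y : HY →L[ℂ] ℂ), f (x, c • y) = c * f (x, y)} := by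
    simp only [Set.setOf_forall]
    exact isClosed_iInter fun x => isClosed_iInter fun c => isClosed_iInter fun y =>
      isClosed_eq (continuous_apply _) (continuous_const.mul (continuous_apply _))
  have c3 : IsClosed {f : HX × (HY →L[ℂ] ℂ) → ℂ |
      ∀ x x' (y : HY →L[ℂ] ℂ), f (x + x', y) = f (x, y) + f (x', y)} := by
    simp only [Set.setOf_forall]
    exact isClosed_iInter fun x => isClosed_iInter fun x' => isClosed_iInter fun y =>
      isClosed_eq (continuous_apply (x + x', y))
        ((continuous_apply (x, y)).add (continuous_apply (x', y)))
  have c4 : IsClosed {f : HX × (HY →L[ℂ] ℂ) → ℂ |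
      ∀ (c : ℂ) x (y : HY →L[ℂ] ℂ), f (c • x, y) = c * f (x, y)} := by
    simp only [Set.setOf_forall]
    exact isClosed_iInter fun c => isClosed_iInter fun x => isClosed_iInter fun y =>
      isClosed_eq (continuous_apply _) (continuous_const.mul (continuous_apply _))
  have hLclosed : IsClosed L := by
    rw [hL]
    simp only [Set.setOf_and]
    exact c1.inter (c2.inter (c3.inter c4))
  have himage : (⇑ind) '' {t : HX →WOT[ℂ] HY | ‖((ContinuousLinearMapWOT.linearEquiv ℂ : (HX →WOT[ℂ] HY) ≃ₗ[ℂ] (HX →L[ℂ] HY)).symm).symm t‖ ≤ C}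
      = K ∩ L := by
    ext f
    constructor
    · rintro ⟨t, ht, rfl⟩
      set s := ((ContinuousLinearMapWOT.linearEquiv ℂ : (HX →WOT[ℂ] HY) ≃ₗ[ℂ] (HX →L[ℂ] HY)).symm).symm t with hs
      have happ : ∀ p : HX × (HY →L[ℂ] ℂ), ind t p = p.2 (s p.1) := fun p => rfl
      constructor
      · intro p _
        rw [Metric.mem_closedBall, dist_zero_right, happ]
        calc ‖p.2 (s p.1)‖ ≤ ‖p.2‖ * ‖s p.1‖ := p.2.le_opNorm _
        _ ≤ ‖p.2‖ * (‖s‖ * ‖p.1‖) := by gcongr; exact s.le_opNorm _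
        _ ≤ ‖p.2‖ * (C * ‖p.1‖) := by gcongr; exact ht
        _ = C * ‖p.1‖ * ‖p.2‖ := by ring
      · refine ⟨fun x y y' => ?_, fun x c y => ?_, fun x x' y => ?_, fun c x y => ?_⟩ <;>
          simp [happ, map_add, map_smul, smul_eq_mul]
    · rintro ⟨hfK, hf1, hf2, hf3, hf4⟩
      have hbd : ∀ p, ‖f p‖ ≤ C * ‖p.1‖ * ‖p.2‖ := by
        intro p
        have := hfK p (Set.mem_univ p)
        rwa [Metric.mem_closedBall, dist_zero_right] at this
      obtain ⟨t, htn, htf⟩ := exists_op_aux f C hC hbd hf1 hf2 hf3 hf4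
      refine ⟨(ContinuousLinearMapWOT.linearEquiv ℂ : (HX →WOT[ℂ] HY) ≃ₗ[ℂ] (HX →L[ℂ] HY)).symm t, ?_, ?_⟩
      · show ‖((ContinuousLinearMapWOT.linearEquiv ℂ : (HX →WOT[ℂ] HY) ≃ₗ[ℂ] (HX →L[ℂ] HY)).symm).symm (((ContinuousLinearMapWOT.linearEquiv ℂ : (HX →WOT[ℂ] HY) ≃ₗ[ℂ] (HX →L[ℂ] HY)).symm) t)‖ ≤ C
        rw [LinearEquiv.symm_apply_apply]; exact htn
      · funext p
        have : ind ((ContinuousLinearMapWOT.linearEquiv ℂ : (HX →WOT[ℂ] HY) ≃ₗ[ℂ] (HX →L[ℂ] HY)).symm t) p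
            = p.2 ((((ContinuousLinearMapWOT.linearEquiv ℂ : (HX →WOT[ℂ] HY) ≃ₗ[ℂ] (HX →L[ℂ] HY)).symm).symm
                (((ContinuousLinearMapWOT.linearEquiv ℂ : (HX →WOT[ℂ] HY) ≃ₗ[ℂ] (HX →L[ℂ] HY)).symm) t)) p.1) := rfl
        rw [this, LinearEquiv.symm_apply_apply]
        exact htf p.1 p.2
  rw [himage]
  exact (isCompact_univ_pi fun p => isCompact_closedBall _ _).inter_right hLclosed

private lemma isClosed_suppIn_aux (MX : CoarseModule 𝓔 HX) (MY : CoarseModule 𝓕 HY)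
    (S : Set (Y × X)) :
    IsClosed {t : HX →WOT[ℂ] HY |
        SuppIn MX MY (((ContinuousLinearMapWOT.linearEquiv ℂ : (HX →WOT[ℂ] HY) ≃ₗ[ℂ] (HX →L[ℂ] HY)).symm).symm t) S} := by
  have hset : {t : HX →WOT[ℂ] HY |
      SuppIn MX MY (((ContinuousLinearMapWOT.linearEquiv ℂ : (HX →WOT[ℂ] HY) ≃ₗ[ℂ] (HX →L[ℂ] HY)).symm).symm t) S} =
      ⋂ (A : Set X) (_ : A ∈ MX.meas) (B : Set Y) (_ : B ∈ MY.meas)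
        (_ : B ∩ relImage S A = ∅) (x : HX) (u : HY),
        {t : HX →WOT[ℂ] HY |
          ⟪u, MY.proj B ((((ContinuousLinearMapWOT.linearEquiv ℂ : (HX →WOT[ℂ] HY) ≃ₗ[ℂ] (HX →L[ℂ] HY)).symm).symm t) (MX.proj A x))⟫ = 0} := by
    ext t
    simp only [Set.mem_setOf_eq, Set.mem_iInter, SuppIn]
    constructor
    · intro h A hA B hB hAB x u
      exact (op_eq_zero_iff_aux _ _ _).mp (h A hA B hB hAB) x u
    · intro h A hA B hB hAB
      exact (op_eq_zero_iff_aux _ _ _).mpr (h A hA B hB hAB)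
  rw [hset]
  refine isClosed_iInter fun A => isClosed_iInter fun _ => isClosed_iInter fun B =>
    isClosed_iInter fun _ => isClosed_iInter fun _ => isClosed_iInter fun x =>
    isClosed_iInter fun u => ?_
  have hc : Continuous fun t : HX →WOT[ℂ] HY =>
      ⟪u, MY.proj B ((((ContinuousLinearMapWOT.linearEquiv ℂ : (HX →WOT[ℂ] HY) ≃ₗ[ℂ] (HX →L[ℂ] HY)).symm).symm t) (MX.proj A x))⟫ := by
    have := cont_aux (MX.proj A x) ((InnerProductSpace.toDual ℂ HY u).comp (MY.proj B))
    simpa using this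
  exact isClosed_eq hc continuous_const

private lemma isClosed_suppQuasiIn_aux (MX : CoarseModule 𝓔 HX) (MY : CoarseModule 𝓕 HY)
    (S : Set (Y × X)) {ε : ℝ} (hε : 0 ≤ ε) :
    IsClosed {t : HX →WOT[ℂ] HY |
        SuppQuasiIn MX MY (((ContinuousLinearMapWOT.linearEquiv ℂ : (HX →WOT[ℂ] HY) ≃ₗ[ℂ] (HX →L[ℂ] HY)).symm).symm t) ε S} := by
  have hset : {t : HX →WOT[ℂ] HY |
      SuppQuasiIn MX MY (((ContinuousLinearMapWOT.linearEquiv ℂ : (HX →WOT[ℂ] HY) ≃ₗ[ℂ] (HX →L[ℂ] HY)).symm).symm t) ε S} =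
      ⋂ (A : Set X) (_ : A ∈ MX.meas) (B : Set Y) (_ : B ∈ MY.meas)
        (_ : B ∩ relImage S A = ∅) (x : HX) (u : HY),
        {t : HX →WOT[ℂ] HY |
          ‖⟪u, MY.proj B ((((ContinuousLinearMapWOT.linearEquiv ℂ : (HX →WOT[ℂ] HY) ≃ₗ[ℂ] (HX →L[ℂ] HY)).symm).symm t) (MX.proj A x))⟫‖
            ≤ ε * ‖x‖ * ‖u‖} := by
    ext t
    simp only [Set.mem_setOf_eq, Set.mem_iInter, SuppQuasiIn]
    constructor
    · intro h A hA B hB hAB x u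
      exact (op_norm_le_iff_aux _ _ _ hε).mp (h A hA B hB hAB) x u
    · intro h A hA B hB hAB
      exact (op_norm_le_iff_aux _ _ _ hε).mpr (h A hA B hB hAB)
  rw [hset]
  refine isClosed_iInter fun A => isClosed_iInter fun _ => isClosed_iInter fun B =>
    isClosed_iInter fun _ => isClosed_iInter fun _ => isClosed_iInter fun x =>
    isClosed_iInter fun u => ?_
  have hc : Continuous fun t : HX →WOT[ℂ] HY =>
      ⟪u, MY.proj B ((((ContinuousLinearMapWOT.linearEquiv ℂ : (HX →WOT[ℂ] HY) ≃ₗ[ℂ] (HX →L[ℂ] HY)).symm).symm t) (MX.proj A x))⟫ := by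
    have := cont_aux (MX.proj A x) ((InnerProductSpace.toDual ℂ HY u).comp (MY.proj B))
    simpa using this
  exact isClosed_le hc.norm continuous_const

end Aux

/-- For any relation `S ⊆ Y × X` and `ε > 0`, the following sets of operators are closed in
the weak operator topology: (i) operators with support contained in `S`; (ii) operators with
support `ε`-quasi-contained in `S`; (iii) operators with support `ε`-approximately contained
in `S`. -/
theorem stmt12 (MX : CoarseModule 𝓔 HX) (MY : CoarseModule 𝓕 HY)
    (S : Set (Y × X)) (ε : ℝ) (hε : 0 < ε) :
    IsClosed {t : HX →WOT[ℂ] HY |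
        SuppIn MX MY (ContinuousLinearMapWOT.toCLM t) S} ∧
    IsClosed {t : HX →WOT[ℂ] HY |
        SuppQuasiIn MX MY (ContinuousLinearMapWOT.toCLM t) ε S} ∧
    IsClosed {t : HX →WOT[ℂ] HY |
        SuppApproxIn MX MY (ContinuousLinearMapWOT.toCLM t) ε S} := by
  classical
  have hpart1 := isClosed_suppIn_aux MX MY S
  refine ⟨hpart1, isClosed_suppQuasiIn_aux MX MY S hε.le, ?_⟩
  refine isClosed_of_closure_subset fun t ht => ?_
  rw [mem_closure_iff_ultrafilter] at ht
  obtain ⟨u, hus, hut⟩ := ht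
  set T := (ContinuousLinearMapWOT.linearEquiv ℂ : (HX →WOT[ℂ] HY) ≃ₗ[ℂ] (HX →L[ℂ] HY)).symm with hT
  set r : (HX →WOT[ℂ] HY) → (HX →WOT[ℂ] HY) := fun t' =>
    if h : SuppApproxIn MX MY (T.symm t') ε S then T (T.symm t' - h.choose) else 0 with hr
  have hr1 : ∀ t' ∈ {t : HX →WOT[ℂ] HY | SuppApproxIn MX MY (T.symm t) ε S},
      ‖T.symm (r t')‖ ≤ ε ∧ SuppIn MX MY (T.symm t' - T.symm (r t')) S := by
    intro t' h
    have h' : SuppApproxIn MX MY (T.symm t') ε S := h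
    have hrt : r t' = T (T.symm t' - h'.choose) := dif_pos h'
    rw [hrt, LinearEquiv.symm_apply_apply]
    obtain ⟨hs1, hs2⟩ := h'.choose_spec
    exact ⟨hs2, by rwa [sub_sub_cancel]⟩
  have hK : {t : HX →WOT[ℂ] HY | ‖T.symm t‖ ≤ ε} ∈ Ultrafilter.map r u := by
    rw [Ultrafilter.mem_map]
    exact Filter.mem_of_superset hus fun t' h => (hr1 t' h).1
  obtain ⟨ρ, hρK, hρle⟩ := (isCompact_wotBall (HX := HX) (HY := HY) ε hε.le).ultrafilter_le_nhds
    (Ultrafilter.map r u) (Filter.le_principal_iff.mpr hK)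
  have hρ' : Filter.Tendsto r (↑u) (nhds ρ) := hρle
  have htend : Filter.Tendsto (fun t' => t' - r t') (↑u) (nhds (t - ρ)) :=
    Filter.Tendsto.sub hut hρ'
  have hmem : ∀ᶠ t' in (↑u : Filter (HX →WOT[ℂ] HY)),
      t' - r t' ∈ {t : HX →WOT[ℂ] HY | SuppIn MX MY (T.symm t) S} :=
    Filter.mem_of_superset hus fun t' h => by
      have := (hr1 t' h).2
      simp only [Set.mem_setOf_eq, map_sub]
      exact this
  have hfinal : t - ρ ∈ {t : HX →WOT[ℂ] HY | SuppIn MX MY (T.symm t) S} :=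
    hpart1.mem_of_tendsto htend hmem
  refine ⟨T.symm (t - ρ), hfinal, ?_⟩
  rw [map_sub]
  simpa [hT] using hρK
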